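/- (Kohn–Morrey formula, compactly supported case.) Let Ω ⊆ ℂⁿ be open, let φ : Ω → ℝ be of class C², and let f = (f_1,…,f_n) be a (0,1)-form with smooth compactly supported coefficients on Ω. Then Σ_{j,k=1}^n ∫_Ω (∂²φ/∂z_j∂z̄_k) f_j f̄_k e^{−φ} dλ + Σ_{j,k=1}^n ∫_Ω |∂f_j/∂z̄_k|² e^{−φ} dλ = ‖∂̄f‖²_φ + ‖∂̄*_φ f‖²_φ. -/

import Mathlib

open MeasureTheory Complex Metric Filter
noncomputable section

/-- `ℂⁿ` with its Euclidean inner product and norm. -/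
abbrev Cn (n : ℕ) := EuclideanSpace ℂ (Fin n)

instance {n : ℕ} : MeasurableSpace (Cn n) := MeasurableSpace.comap (WithLp.ofLp (p := 2)) MeasurableSpace.pi

/-- Lebesgue measure on `ℂⁿ ≅ ℝ^{2n}`. -/
instance {n : ℕ} : MeasureSpace (Cn n) := ⟨MeasureTheory.Measure.map (WithLp.toLp 2) (MeasureTheory.Measure.pi fun _ => volume)⟩

/-- The real coordinate direction indexed by `(j, b)`: the `x_j`-direction if `b = false`,
the `y_j`-direction if `b = true`. -/
def dir {n : ℕ} (l : Fin n × Bool) : Cn n :=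
  EuclideanSpace.single l.1 (if l.2 then Complex.I else 1)

/-- The real partial derivative `∂_l`, `l` ranging over the `2n` real coordinate
directions of `ℂⁿ`. -/
def pd {n : ℕ} {F : Type} [NormedAddCommGroup F] [NormedSpace ℝ F]
    (l : Fin n × Bool) (f : Cn n → F) (z : Cn n) : F :=
  fderiv ℝ f z (dir l)

/-- The real Laplacian `Δφ = Σ_l ∂_l ∂_l φ`. -/
def lap {n : ℕ} (φ : Cn n → ℝ) (z : Cn n) : ℝ :=
  ∑ l : Fin n × Bool, pd l (pd l φ) z

/-- `|∇φ|²`, the squared norm of the real gradient. -/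
def gradSq {n : ℕ} (φ : Cn n → ℝ) (z : Cn n) : ℝ :=
  ∑ l : Fin n × Bool, (pd l φ z)^2

/-- The Levi form `L_u(z;t) = ¼(D²u(z)(t,t) + D²u(z)(it,it))`. -/
def levi {n : ℕ} (u : Cn n → ℝ) (z t : Cn n) : ℝ :=
  (1/4) * (fderiv ℝ (fun w => fderiv ℝ u w t) z t
    + fderiv ℝ (fun w => fderiv ℝ u w (Complex.I • t)) z (Complex.I • t))

/-- The Wirtinger derivative `∂g/∂z_j = ½(∂g/∂x_j − i ∂g/∂y_j)` of a complex-valued function. -/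
def wz {n : ℕ} (j : Fin n) (g : Cn n → ℂ) (z : Cn n) : ℂ :=
  (1/2) * (pd (j, false) g z - Complex.I * pd (j, true) g z)

/-- The Wirtinger derivative `∂g/∂z̄_j = ½(∂g/∂x_j + i ∂g/∂y_j)` of a complex-valued function. -/
def wzbar {n : ℕ} (j : Fin n) (g : Cn n → ℂ) (z : Cn n) : ℂ :=
  (1/2) * (pd (j, false) g z + Complex.I * pd (j, true) g z)

/-- The Wirtinger derivative `∂φ/∂z_j` of a real-valued function. -/
def wzR {n : ℕ} (j : Fin n) (φ : Cn n → ℝ) (z : Cn n) : ℂ :=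
  (1/2) * (Complex.ofReal (pd (j, false) φ z) - Complex.I * Complex.ofReal (pd (j, true) φ z))

/-- The Wirtinger derivative `∂φ/∂z̄_j` of a real-valued function. -/
def wzbarR {n : ℕ} (j : Fin n) (φ : Cn n → ℝ) (z : Cn n) : ℂ :=
  (1/2) * (Complex.ofReal (pd (j, false) φ z) + Complex.I * Complex.ofReal (pd (j, true) φ z))

/-- The complex Hessian coefficient `∂²φ/∂z_j∂z̄_k`. -/
def hess {n : ℕ} (φ : Cn n → ℝ) (j k : Fin n) (z : Cn n) : ℂ :=
  wz j (fun w => wzbarR k φ w) z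

/-- `∂̄*_φ f = −Σ_j (∂f_j/∂z_j − (∂φ/∂z_j) f_j)` for a `(0,1)`-form `f = (f_1,…,f_n)`. -/
def dbarStar {n : ℕ} (φ : Cn n → ℝ) (f : Fin n → Cn n → ℂ) (z : Cn n) : ℂ :=
  -∑ j, (wz j (f j) z - wzR j φ z * f j z)

/-- `f ∈ C_c^∞(Ω)`: smooth, compactly supported, with support inside `Ω`. -/
def SmoothCompSupp {n : ℕ} (Ω : Set (Cn n)) (f : Cn n → ℂ) : Prop :=
  ContDiff ℝ (⊤ : ℕ∞) f ∧ HasCompactSupport f ∧ tsupport f ⊆ Ω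

section KMaux
open ComplexConjugate
variable {n : ℕ}

instance : BorelSpace (Cn n) := PiLp.borelSpace 2 (X := fun _ : Fin n => ℂ)
instance : (volume : MeasureTheory.Measure (Cn n)).IsAddHaarMeasure :=
  (PiLp.continuousLinearEquiv 2 ℝ (fun _ : Fin n => ℂ)).symm.isAddHaarMeasure_map
    (MeasureTheory.Measure.pi fun _ => volume)

lemma pd_add {g h : Cn n → ℂ} {z : Cn n} (hg : DifferentiableAt ℝ g z)
    (hh : DifferentiableAt ℝ h z) (l : Fin n × Bool) :
    pd l (fun w => g w + h w) z = pd l g z + pd l h z := by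
  simp [pd, fderiv_fun_add hg hh]

lemma pd_sub {g h : Cn n → ℂ} {z : Cn n} (hg : DifferentiableAt ℝ g z)
    (hh : DifferentiableAt ℝ h z) (l : Fin n × Bool) :
    pd l (fun w => g w - h w) z = pd l g z - pd l h z := by
  simp [pd, fderiv_fun_sub hg hh]

lemma pd_mul {g h : Cn n → ℂ} {z : Cn n} (hg : DifferentiableAt ℝ g z)
    (hh : DifferentiableAt ℝ h z) (l : Fin n × Bool) :
    pd l (fun w => g w * h w) z = pd l g z * h z + g z * pd l h z := by
  simp [pd, fderiv_fun_mul hg hh]; ring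

lemma pd_const_mul {g : Cn n → ℂ} {z : Cn n} (hg : DifferentiableAt ℝ g z) (c : ℂ)
    (l : Fin n × Bool) :
    pd l (fun w => c * g w) z = c * pd l g z := by
  simp [pd, fderiv_const_mul hg]

lemma pd_conj (g : Cn n → ℂ) (z : Cn n) (l : Fin n × Bool) :
    pd l (fun w => conj (g w)) z = conj (pd l g z) := by
  simp only [pd]
  rw [show (fun w => conj (g w)) = (fun w => star (g w)) from rfl, fderiv_star]
  simp

lemma pd_ofReal {g : Cn n → ℝ} {z : Cn n} (hg : DifferentiableAt ℝ g z) (l : Fin n × Bool) :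
    pd l (fun w => (g w : ℂ)) z = ((pd l g z : ℝ) : ℂ) := by
  simp only [pd]
  have h := (Complex.ofRealCLM.hasFDerivAt (x := g z)).comp z hg.hasFDerivAt
  rw [show (fun w => (g w : ℂ)) = (Complex.ofRealCLM ∘ g) from rfl, h.fderiv]
  simp

end KMaux
section KMaux2
open ComplexConjugate
variable {n : ℕ}

lemma pd_exp_neg {φ : Cn n → ℝ} {z : Cn n} (hφ : DifferentiableAt ℝ φ z) (l : Fin n × Bool) :
    pd l (fun w => (Real.exp (-φ w) : ℂ)) z
      = -((pd l φ z : ℝ) : ℂ) * (Real.exp (-φ z) : ℂ) := by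
  have h1 : HasFDerivAt (fun w => Real.exp (-φ w))
      (Real.exp (-φ z) • (-fderiv ℝ φ z)) z :=
    (Real.hasDerivAt_exp (-φ z)).comp_hasFDerivAt (f := fun w => -φ w) z
      (hφ.hasFDerivAt.neg : HasFDerivAt (fun w => -φ w) (-fderiv ℝ φ z) z)
  rw [pd_ofReal h1.differentiableAt]
  have : pd l (fun w => Real.exp (-φ w)) z = Real.exp (-φ z) * (-(pd l φ z)) := by
    simp [pd, h1.fderiv]
  rw [this]; push_cast; ring

lemma ContDiff.pd' {v : Cn n → ℂ} (hv : ContDiff ℝ (⊤ : ℕ∞) v) (l : Fin n × Bool) :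
    ContDiff ℝ (⊤ : ℕ∞) (pd l v) :=
  ((hv.fderiv_right (le_of_eq (by rfl))).clm_apply contDiff_const)

lemma pd_pd {F : Type} [NormedAddCommGroup F] [NormedSpace ℝ F] {v : Cn n → F} {z : Cn n}
    (hd : DifferentiableAt ℝ (fderiv ℝ v) z) (l m : Fin n × Bool) :
    pd l (pd m v) z = fderiv ℝ (fderiv ℝ v) z (dir l) (dir m) := by
  have h : pd m v = fun w => (fderiv ℝ v w) (dir m) := rfl
  rw [pd, h, fderiv_clm_apply hd (differentiableAt_const _)]
  simp

lemma pd_comm {F : Type} [NormedAddCommGroup F] [NormedSpace ℝ F] {v : Cn n → F} {z : Cn n}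
    (hev : ∀ᶠ y in nhds z, DifferentiableAt ℝ v y)
    (hd : DifferentiableAt ℝ (fderiv ℝ v) z) (l m : Fin n × Bool) :
    pd l (pd m v) z = pd m (pd l v) z := by
  rw [pd_pd hd, pd_pd hd]
  exact second_derivative_symmetric_of_eventually
    (hev.mono fun y hy => hy.hasFDerivAt) hd.hasFDerivAt _ _

lemma wz_mul {g h : Cn n → ℂ} {z : Cn n} (hg : DifferentiableAt ℝ g z)
    (hh : DifferentiableAt ℝ h z) (j : Fin n) :
    wz j (fun w => g w * h w) z = wz j g z * h z + g z * wz j h z := by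
  simp only [wz, pd_mul hg hh]; ring

lemma wzbar_mul {g h : Cn n → ℂ} {z : Cn n} (hg : DifferentiableAt ℝ g z)
    (hh : DifferentiableAt ℝ h z) (j : Fin n) :
    wzbar j (fun w => g w * h w) z = wzbar j g z * h z + g z * wzbar j h z := by
  simp only [wzbar, pd_mul hg hh]; ring

lemma wz_conj (g : Cn n → ℂ) (z : Cn n) (j : Fin n) :
    wz j (fun w => conj (g w)) z = conj (wzbar j g z) := by
  simp only [wz, wzbar, pd_conj, map_mul, map_add, map_sub, map_one, map_ofNat,
    Complex.conj_I, map_inv₀, map_div₀]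
  ring

lemma wzbar_conj (g : Cn n → ℂ) (z : Cn n) (j : Fin n) :
    wzbar j (fun w => conj (g w)) z = conj (wz j g z) := by
  simp only [wz, wzbar, pd_conj, map_mul, map_add, map_sub, map_one, map_ofNat,
    Complex.conj_I, map_inv₀, map_div₀]
  ring

lemma wz_sub {g h : Cn n → ℂ} {z : Cn n} (hg : DifferentiableAt ℝ g z)
    (hh : DifferentiableAt ℝ h z) (j : Fin n) :
    wz j (fun w => g w - h w) z = wz j g z - wz j h z := by
  simp only [wz, pd_sub hg hh]; ring

lemma wzbar_sub {g h : Cn n → ℂ} {z : Cn n} (hg : DifferentiableAt ℝ g z)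
    (hh : DifferentiableAt ℝ h z) (j : Fin n) :
    wzbar j (fun w => g w - h w) z = wzbar j g z - wzbar j h z := by
  simp only [wzbar, pd_sub hg hh]; ring

lemma wz_exp_neg {φ : Cn n → ℝ} {z : Cn n} (hφ : DifferentiableAt ℝ φ z) (j : Fin n) :
    wz j (fun w => (Real.exp (-φ w) : ℂ)) z = -(wzR j φ z) * (Real.exp (-φ z) : ℂ) := by
  simp only [wz, wzR, pd_exp_neg hφ]; ring

lemma wzbar_exp_neg {φ : Cn n → ℝ} {z : Cn n} (hφ : DifferentiableAt ℝ φ z) (j : Fin n) :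
    wzbar j (fun w => (Real.exp (-φ w) : ℂ)) z = -(wzbarR j φ z) * (Real.exp (-φ z) : ℂ) := by
  simp only [wzbar, wzbarR, pd_exp_neg hφ]; ring

lemma conj_wzbar_wzR (φ : Cn n → ℝ) (j k : Fin n) (z : Cn n) :
    conj (wzbar j (wzR k φ) z) = hess φ j k z := by
  have h : wzR k φ = fun w => conj (wzbarR k φ w) := by
    funext w
    simp only [wzR, wzbarR, map_mul, map_add, map_sub, Complex.conj_I, Complex.conj_ofReal,
      map_ofNat, map_inv₀, map_div₀, map_one]
    ring
  rw [h, wzbar_conj]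
  simp [hess]

end KMaux2
section KMaux3
open ComplexConjugate
variable {n : ℕ}

lemma ContDiff.diffAt {g : Cn n → ℂ} (hg : ContDiff ℝ (⊤ : ℕ∞) g) (z : Cn n) :
    DifferentiableAt ℝ g z := (hg.differentiable (by simp)) z

lemma ContDiff.wz' {v : Cn n → ℂ} (hv : ContDiff ℝ (⊤ : ℕ∞) v) (j : Fin n) :
    ContDiff ℝ (⊤ : ℕ∞) (wz j v) := by
  have h : wz j v = fun w => (1/2:ℂ) * (pd (j,false) v w - Complex.I * pd (j,true) v w) := rfl
  rw [h]
  exact contDiff_const.mul ((hv.pd' (j,false)).sub (contDiff_const.mul (hv.pd' (j,true))))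
  
lemma ContDiff.wzbar' {v : Cn n → ℂ} (hv : ContDiff ℝ (⊤ : ℕ∞) v) (j : Fin n) :
    ContDiff ℝ (⊤ : ℕ∞) (wzbar j v) := by
  have h : wzbar j v = fun w => (1/2:ℂ) * (pd (j,false) v w + Complex.I * pd (j,true) v w) := rfl
  rw [h]
  exact contDiff_const.mul ((hv.pd' (j,false)).add (contDiff_const.mul (hv.pd' (j,true))))

example : ∀ (g : Cn 2 → ℂ), ContDiff ℝ (⊤:ℕ∞) g → ContDiff ℝ (⊤:ℕ∞) (fun w => conj (g w)) :=
  fun g hg => (Complex.conjCLE : ℂ ≃L[ℝ] ℂ).toContinuousLinearMap.contDiff.comp hg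

lemma wzbar_wz_comm {v : Cn n → ℂ} (hv : ContDiff ℝ (⊤ : ℕ∞) v) (j k : Fin n) (z : Cn n) :
    wzbar j (wz k v) z = wz k (wzbar j v) z := by
  have hdv : ∀ m : Fin n × Bool, DifferentiableAt ℝ (pd m v) z :=
    fun m => (hv.pd' m).diffAt z
  have hfd : DifferentiableAt ℝ (fderiv ℝ v) z := by
    have h := hv.fderiv_right (m := (⊤:ℕ∞)) (le_of_eq (by rfl))
    exact (h.differentiable (by simp)) z
  have hswap : ∀ l m, pd l (pd m v) z = pd m (pd l v) z :=
    fun l m => pd_comm (Filter.Eventually.of_forall fun y => hv.diffAt y) hfd l m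
  have key : ∀ (c : ℂ) (A B : Cn n → ℂ), DifferentiableAt ℝ A z → DifferentiableAt ℝ B z →
      ∀ l, pd l (fun w => (1/2 : ℂ) * (A w + c * B w)) z
        = (1/2 : ℂ) * (pd l A z + c * pd l B z) := by
    intro c A B hA hB l
    rw [pd_const_mul (g := fun w => A w + c * B w) (hA.add (hB.const_mul c)), pd_add hA (hB.const_mul c), pd_const_mul hB]
  have ewz : wz k v = fun w => (1/2:ℂ) * (pd (k,false) v w + (-Complex.I) * pd (k,true) v w) := by
    funext w; simp only [wz]; ring
  have ewzbar : wzbar j v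
      = fun w => (1/2:ℂ) * (pd (j,false) v w + Complex.I * pd (j,true) v w) := rfl
  have L : wzbar j (wz k v) z
      = (1/2:ℂ) * (pd (j,false) (wz k v) z + Complex.I * pd (j,true) (wz k v) z) := rfl
  have R : wz k (wzbar j v) z
      = (1/2:ℂ) * (pd (k,false) (wzbar j v) z - Complex.I * pd (k,true) (wzbar j v) z) := rfl
  rw [L, R, ewz, ewzbar,
    key _ _ _ (hdv _) (hdv _) (j,false), key _ _ _ (hdv _) (hdv _) (j,true),
    key _ _ _ (hdv _) (hdv _) (k,false), key _ _ _ (hdv _) (hdv _) (k,true),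
    hswap (j,false) (k,false), hswap (j,false) (k,true),
    hswap (j,true) (k,false), hswap (j,true) (k,true)]
  ring

end KMaux3
section KMaux4
open ComplexConjugate
variable {n : ℕ}

lemma conj_wzR (φ : Cn n → ℝ) (k : Fin n) (z : Cn n) :
    conj (wzR k φ z) = wzbarR k φ z := by
  simp only [wzR, wzbarR, map_mul, map_add, map_sub, Complex.conj_I, Complex.conj_ofReal,
    map_ofNat, map_inv₀, map_div₀, map_one]
  ring

lemma conj_wzbarR (φ : Cn n → ℝ) (k : Fin n) (z : Cn n) :
    conj (wzbarR k φ z) = wzR k φ z := by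
  rw [← conj_wzR]; simp

lemma diff_φ {Ω : Set (Cn n)} (hΩ : IsOpen Ω) {φ : Cn n → ℝ} (hφ : ContDiffOn ℝ 2 φ Ω)
    {z : Cn n} (hz : z ∈ Ω) : DifferentiableAt ℝ φ z :=
  ((hφ.differentiableOn (by norm_num)) z hz).differentiableAt (hΩ.mem_nhds hz)

lemma diff_fderivφ {Ω : Set (Cn n)} (hΩ : IsOpen Ω) {φ : Cn n → ℝ} (hφ : ContDiffOn ℝ 2 φ Ω)
    {z : Cn n} (hz : z ∈ Ω) : DifferentiableAt ℝ (fderiv ℝ φ) z := by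
  have h1 : ContDiffOn ℝ 1 (fderiv ℝ φ) Ω := hφ.fderiv_of_isOpen hΩ (by norm_num)
  exact ((h1.differentiableOn (by norm_num)) z hz).differentiableAt (hΩ.mem_nhds hz)

lemma diff_pdφ {Ω : Set (Cn n)} (hΩ : IsOpen Ω) {φ : Cn n → ℝ} (hφ : ContDiffOn ℝ 2 φ Ω)
    {z : Cn n} (hz : z ∈ Ω) (m : Fin n × Bool) : DifferentiableAt ℝ (pd m φ) z := by
  have : pd m φ = fun w => (fderiv ℝ φ w) (dir m) := rfl
  rw [this]
  exact (diff_fderivφ hΩ hφ hz).clm_apply (differentiableAt_const _)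

lemma diff_pdφC {Ω : Set (Cn n)} (hΩ : IsOpen Ω) {φ : Cn n → ℝ} (hφ : ContDiffOn ℝ 2 φ Ω)
    {z : Cn n} (hz : z ∈ Ω) (m : Fin n × Bool) :
    DifferentiableAt ℝ (fun w => ((pd m φ w : ℝ) : ℂ)) z :=
  Complex.ofRealCLM.differentiableAt.comp z (diff_pdφ hΩ hφ hz m)

lemma diff_wzR {Ω : Set (Cn n)} (hΩ : IsOpen Ω) {φ : Cn n → ℝ} (hφ : ContDiffOn ℝ 2 φ Ω)
    {z : Cn n} (hz : z ∈ Ω) (k : Fin n) : DifferentiableAt ℝ (wzR k φ) z := by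
  have : wzR k φ = fun w => (1/2 : ℂ) *
      (((pd (k,false) φ w : ℝ) : ℂ) - Complex.I * ((pd (k,true) φ w : ℝ) : ℂ)) := rfl
  rw [this]
  exact (((diff_pdφC hΩ hφ hz _).sub ((diff_pdφC hΩ hφ hz _).const_mul _)).const_mul _)

lemma diff_E {Ω : Set (Cn n)} (hΩ : IsOpen Ω) {φ : Cn n → ℝ} (hφ : ContDiffOn ℝ 2 φ Ω)
    {z : Cn n} (hz : z ∈ Ω) :
    DifferentiableAt ℝ (fun w => ((Real.exp (-φ w) : ℝ) : ℂ)) z :=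
  Complex.ofRealCLM.differentiableAt.comp z ((diff_φ hΩ hφ hz).neg.exp)

lemma pointwise_ibp {Ω : Set (Cn n)} (hΩ : IsOpen Ω) {φ : Cn n → ℝ}
    (hφ : ContDiffOn ℝ 2 φ Ω) {u v : Cn n → ℂ}
    (hu : ContDiff ℝ (⊤ : ℕ∞) u) (hv : ContDiff ℝ (⊤ : ℕ∞) v)
    (j k : Fin n) {z : Cn n} (hz : z ∈ Ω) :
    (wz j u z - wzR j φ z * u z) * conj (wz k v z - wzR k φ z * v z) * (Real.exp (-φ z) : ℂ)
      = wzbar k u z * conj (wzbar j v z) * (Real.exp (-φ z) : ℂ)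
        + hess φ j k z * u z * conj (v z) * (Real.exp (-φ z) : ℂ)
        + wz j (fun w => u w * (Real.exp (-φ w) : ℂ)
            * conj (wz k v w - wzR k φ w * v w)) z
        - wzbar k (fun w => u w * conj (wzbar j v w) * (Real.exp (-φ w) : ℂ)) z := by
  have hud := hu.diffAt z
  have hvd := hv.diffAt z
  have hφd := diff_φ hΩ hφ hz
  have hEd := diff_E hΩ hφ hz
  have hwzRk := diff_wzR hΩ hφ hz k
  have hwzRj := diff_wzR hΩ hφ hz j
  have hwzkv : DifferentiableAt ℝ (wz k v) z := (hv.wz' k).diffAt z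
  have hwt : DifferentiableAt ℝ (wzbar j v) z := (hv.wzbar' j).diffAt z
  have hδ : DifferentiableAt ℝ (fun w => wz k v w - wzR k φ w * v w) z :=
    hwzkv.sub (hwzRk.mul hvd)
  have hcδ : DifferentiableAt ℝ (fun w => conj (wz k v w - wzR k φ w * v w)) z :=
    Complex.conjCLE.toContinuousLinearMap.differentiableAt.comp z hδ
  have hcwt : DifferentiableAt ℝ (fun w => conj (wzbar j v w)) z :=
    Complex.conjCLE.toContinuousLinearMap.differentiableAt.comp z hwt
  -- compute T1
  have hT1 : wz j (fun w => u w * (Real.exp (-φ w) : ℂ)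
      * conj (wz k v w - wzR k φ w * v w)) z
      = (wz j u z * (Real.exp (-φ z) : ℂ) + u z * (-(wzR j φ z) * (Real.exp (-φ z) : ℂ)))
          * conj (wz k v z - wzR k φ z * v z)
        + (u z * (Real.exp (-φ z) : ℂ))
          * conj (wz k (wzbar j v) z
              - (wzbar j (wzR k φ) z * v z + wzR k φ z * wzbar j v z)) := by
    rw [wz_mul (g := fun w => u w * (Real.exp (-φ w) : ℂ)) (hud.mul hEd) hcδ, wz_mul hud hEd, wz_exp_neg hφd,
      wz_conj (fun w => wz k v w - wzR k φ w * v w) z j,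
      wzbar_sub (h := fun w => wzR k φ w * v w) hwzkv (hwzRk.mul hvd), wzbar_mul hwzRk hvd, wzbar_wz_comm hv j k z]
  -- compute T2
  have hT2 : wzbar k (fun w => u w * conj (wzbar j v w) * (Real.exp (-φ w) : ℂ)) z
      = (wzbar k u z * conj (wzbar j v z) + u z * conj (wz k (wzbar j v) z))
          * (Real.exp (-φ z) : ℂ)
        + (u z * conj (wzbar j v z)) * (-(wzbarR k φ z) * (Real.exp (-φ z) : ℂ)) := by
    rw [wzbar_mul (g := fun w => u w * conj (wzbar j v w)) (hud.mul hcwt) hEd, wzbar_exp_neg hφd, wzbar_mul hud hcwt,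
      wzbar_conj (wzbar j v) z k]
  rw [hT1, hT2]
  simp only [map_sub, map_add, map_mul, conj_wzbar_wzR, conj_wzR]
  ring

end KMaux4
section KMaux5
open ComplexConjugate Function
variable {n : ℕ} {Ω K : Set (Cn n)}

lemma glue_continuous (hΩ : IsOpen Ω) (hKcl : IsClosed K) (hKΩ : K ⊆ Ω)
    {g : Cn n → ℂ} (hg : ContinuousOn g Ω) (hsupp : Function.support g ⊆ K) :
    Continuous g := by
  rw [continuous_iff_continuousAt]
  intro x
  by_cases hx : x ∈ Ω
  · exact hg.continuousAt (hΩ.mem_nhds hx)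
  · have hxK : x ∈ Kᶜ := fun hxK => hx (hKΩ hxK)
    have hev : ∀ᶠ y in nhds x, g y = 0 := by
      filter_upwards [hKcl.isOpen_compl.mem_nhds hxK] with y hy
      exact Function.notMem_support.mp (fun h => hy (hsupp h))
    exact continuousAt_const.congr (hev.mono fun y hy => hy.symm)

lemma hasCompactSupport_of (hKc : IsCompact K) (hKcl : IsClosed K)
    {g : Cn n → ℂ} (hsupp : Function.support g ⊆ K) : HasCompactSupport g :=
  hKc.of_isClosed_subset isClosed_closure (closure_minimal hsupp hKcl)

lemma integrable_glue (hΩ : IsOpen Ω) (hKcl : IsClosed K) (hKc : IsCompact K) (hKΩ : K ⊆ Ω)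
    {g : Cn n → ℂ} (hg : ContinuousOn g Ω) (hsupp : Function.support g ⊆ K) :
    MeasureTheory.IntegrableOn g Ω :=
  ((glue_continuous hΩ hKcl hKΩ hg hsupp).integrable_of_hasCompactSupport
    (hasCompactSupport_of hKc hKcl hsupp)).integrableOn

lemma glue_C1 (hΩ : IsOpen Ω) (hKcl : IsClosed K) (hKΩ : K ⊆ Ω)
    {g : Cn n → ℂ} (hg : ∀ z ∈ Ω, ContDiffAt ℝ 1 g z) (hsupp : Function.support g ⊆ K) :
    ContDiff ℝ 1 g := by
  rw [contDiff_iff_contDiffAt]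
  intro x
  by_cases hx : x ∈ Ω
  · exact hg x hx
  · have hxK : x ∈ Kᶜ := fun hxK => hx (hKΩ hxK)
    have hev : ∀ᶠ y in nhds x, g y = 0 := by
      filter_upwards [hKcl.isOpen_compl.mem_nhds hxK] with y hy
      exact Function.notMem_support.mp (fun h => hy (hsupp h))
    exact (contDiffAt_const (c := (0:ℂ))).congr_of_eventuallyEq hev

lemma setIntegral_eq_of_supp (hΩ : IsOpen Ω) {g : Cn n → ℂ}
    (hsupp : Function.support g ⊆ Ω) :
    ∫ z in Ω, g z = ∫ z, g z :=
  MeasureTheory.setIntegral_eq_integral_of_forall_compl_eq_zero fun x hx =>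
    Function.notMem_support.mp (fun h => hx (hsupp h))

lemma integral_pd_eq_zero (l : Fin n × Bool) (F : Cn n → ℂ)
    (hF : ContDiff ℝ 1 F) (hsupp : HasCompactSupport F) :
    ∫ z : Cn n, pd l F z = 0 := by
  have hd : Differentiable ℝ F := hF.differentiable one_ne_zero
  have hcont : Continuous fun z => fderiv ℝ F z (dir l) :=
    ((hF.continuous_fderiv one_ne_zero).clm_apply continuous_const)
  have hs2 : HasCompactSupport fun z => fderiv ℝ F z (dir l) :=
    (hsupp.fderiv ℝ).comp_left (g := fun L : (Cn n →L[ℝ] ℂ) => L (dir l)) rfl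
  have hint' : MeasureTheory.Integrable fun z : Cn n => fderiv ℝ F z (dir l) :=
    hcont.integrable_of_hasCompactSupport hs2
  have hint : MeasureTheory.Integrable F := hF.continuous.integrable_of_hasCompactSupport hsupp
  have h := integral_mul_fderiv_eq_neg_fderiv_mul_of_integrable
      (f := fun _ : Cn n => (1:ℂ)) (g := F) (v := dir l) (μ := volume)
      (by simp) (by simpa using hint')
      (by simpa using hint) (fun x _ => differentiable_const _ x) (fun x _ => hd x)
  simpa [pd] using h

lemma integral_pd_zero_on (hΩ : IsOpen Ω) {G : Cn n → ℂ} (hG : ContDiff ℝ 1 G)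
    (hGsupp : HasCompactSupport G) (htsupp : tsupport G ⊆ Ω) (l : Fin n × Bool) :
    ∫ z in Ω, pd l G z = 0 := by
  have hsupp : Function.support (pd l G) ⊆ Ω := by
    intro x hx
    apply htsupp
    have : pd l G x ≠ 0 := hx
    by_contra hxn
    have h0 : fderiv ℝ G x = 0 := by
      by_contra h
      exact hxn (support_fderiv_subset ℝ (Function.mem_support.mpr h))
    exact this (by simp [pd, h0])
  rw [setIntegral_eq_of_supp hΩ hsupp]
  exact integral_pd_eq_zero l G hG hGsupp

lemma integrable_pd (hG : ContDiff ℝ 1 G) (hGsupp : HasCompactSupport (G : Cn n → ℂ))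
    (l : Fin n × Bool) : MeasureTheory.Integrable (pd l G) := by
  have hcont : Continuous (pd l G) := (hG.continuous_fderiv one_ne_zero).clm_apply continuous_const
  have hs : HasCompactSupport (pd l G) :=
    (hGsupp.fderiv ℝ).comp_left (g := fun L : (Cn n →L[ℝ] ℂ) => L (dir l)) rfl
  exact hcont.integrable_of_hasCompactSupport hs

lemma integral_wz_zero (hΩ : IsOpen Ω) {G : Cn n → ℂ} (hG : ContDiff ℝ 1 G)
    (hGsupp : HasCompactSupport G) (htsupp : tsupport G ⊆ Ω) (j : Fin n) :
    ∫ z in Ω, wz j G z = 0 := by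
  have h : ∫ z in Ω, wz j G z = ∫ z in Ω, (1/2 : ℂ)
      * (pd (j,false) G z - Complex.I * pd (j,true) G z) := rfl
  rw [h, MeasureTheory.integral_const_mul, MeasureTheory.integral_sub
    ((integrable_pd hG hGsupp _).integrableOn)
    (((integrable_pd hG hGsupp _).const_mul _).integrableOn),
    MeasureTheory.integral_const_mul, integral_pd_zero_on hΩ hG hGsupp htsupp,
    integral_pd_zero_on hΩ hG hGsupp htsupp]
  simp

lemma integral_wzbar_zero (hΩ : IsOpen Ω) {G : Cn n → ℂ} (hG : ContDiff ℝ 1 G)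
    (hGsupp : HasCompactSupport G) (htsupp : tsupport G ⊆ Ω) (j : Fin n) :
    ∫ z in Ω, wzbar j G z = 0 := by
  have h : ∫ z in Ω, wzbar j G z = ∫ z in Ω, (1/2 : ℂ)
      * (pd (j,false) G z + Complex.I * pd (j,true) G z) := rfl
  rw [h, MeasureTheory.integral_const_mul, MeasureTheory.integral_add
    ((integrable_pd hG hGsupp _).integrableOn)
    (((integrable_pd hG hGsupp _).const_mul _).integrableOn),
    MeasureTheory.integral_const_mul, integral_pd_zero_on hΩ hG hGsupp htsupp,
    integral_pd_zero_on hΩ hG hGsupp htsupp]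
  simp

end KMaux5
section KMaux6
open ComplexConjugate Function
variable {n : ℕ} {Ω : Set (Cn n)}

lemma sum_swap_filter (F : Fin n → Fin n → ℂ) :
    ∑ p ∈ Finset.univ.filter (fun p : Fin n × Fin n => p.2 < p.1), F p.1 p.2
      = ∑ p ∈ Finset.univ.filter (fun p : Fin n × Fin n => p.1 < p.2), F p.2 p.1 := by
  apply Finset.sum_nbij' (i := Prod.swap) (j := Prod.swap) <;> simp

lemma sum_diag_filter (F : Fin n → Fin n → ℂ) :
    ∑ p ∈ Finset.univ.filter (fun p : Fin n × Fin n => p.1 = p.2), F p.1 p.2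
      = ∑ j, F j j := by
  apply Finset.sum_nbij' (i := fun p : Fin n × Fin n => p.1) (j := fun j : Fin n => (j, j)) <;>
    simp +contextual [eq_comm]

lemma offdiag_split (F : Fin n → Fin n → ℂ) :
    ∑ j, ∑ k, F j k
      = (∑ p ∈ Finset.univ.filter (fun p : Fin n × Fin n => p.1 < p.2),
          (F p.1 p.2 + F p.2 p.1))
        + ∑ j, F j j := by
  have h0 : ∑ j, ∑ k, F j k = ∑ p : Fin n × Fin n, F p.1 p.2 := by
    rw [Fintype.sum_prod_type]
  rw [h0, ← Finset.sum_filter_add_sum_filter_not Finset.univ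
    (fun p : Fin n × Fin n => p.1 < p.2) (fun p => F p.1 p.2)]
  have h1 : Finset.univ.filter (fun p : Fin n × Fin n => ¬p.1 < p.2)
      = (Finset.univ.filter (fun p : Fin n × Fin n => p.2 < p.1))
        ∪ (Finset.univ.filter (fun p : Fin n × Fin n => p.1 = p.2)) := by
    ext p; simp [Finset.mem_filter, Finset.mem_union]
    constructor
    · intro h; rcases h.lt_or_eq with h' | h'
      · exact Or.inl h'
      · exact Or.inr h'.symm
    · rintro (h | h)
      · exact h.le
      · exact h.ge
  have hdisj : Disjoint (Finset.univ.filter (fun p : Fin n × Fin n => p.2 < p.1))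
      (Finset.univ.filter (fun p : Fin n × Fin n => p.1 = p.2)) := by
    rw [Finset.disjoint_left]
    intro p hp hp2
    simp only [Finset.mem_filter] at hp hp2
    exact absurd hp2.2 (ne_of_gt hp.2)
  rw [h1, Finset.sum_union hdisj, sum_swap_filter, sum_diag_filter,
    Finset.sum_add_distrib]
  ring

end KMaux6
section KMaux7
open ComplexConjugate Function
variable {n : ℕ} {Ω : Set (Cn n)} {φ : Cn n → ℝ}

lemma ContDiff.one {g : Cn n → ℂ} (hg : ContDiff ℝ (⊤ : ℕ∞) g) : ContDiff ℝ 1 g :=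
  hg.of_le (by exact_mod_cast le_top)

lemma cdat_conj {g : Cn n → ℂ} {z : Cn n} (hg : ContDiffAt ℝ 1 g z) :
    ContDiffAt ℝ 1 (fun w => conj (g w)) z :=
  (Complex.conjCLE.toContinuousLinearMap.contDiff.contDiffAt).comp z hg

lemma cont_conj {g : Cn n → ℂ} (hg : ContinuousOn g Ω) :
    ContinuousOn (fun w => conj (g w)) Ω :=
  Complex.continuous_conj.comp_continuousOn hg

lemma cont_fderivφ (hΩ : IsOpen Ω) (hφ : ContDiffOn ℝ 2 φ Ω) :
    ContinuousOn (fderiv ℝ φ) Ω :=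
  (hφ.fderiv_of_isOpen (m := 1) hΩ (by norm_num)).continuousOn

lemma cont_pdφ (hΩ : IsOpen Ω) (hφ : ContDiffOn ℝ 2 φ Ω) (m : Fin n × Bool) :
    ContinuousOn (pd m φ) Ω := by
  have h : pd m φ = fun w => (fderiv ℝ φ w) (dir m) := rfl
  rw [h]; exact (cont_fderivφ hΩ hφ).clm_apply continuousOn_const

lemma cont_pdφC (hΩ : IsOpen Ω) (hφ : ContDiffOn ℝ 2 φ Ω) (m : Fin n × Bool) :
    ContinuousOn (fun w => ((pd m φ w : ℝ) : ℂ)) Ω :=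
  Complex.continuous_ofReal.comp_continuousOn (cont_pdφ hΩ hφ m)

lemma cont_wzR (hΩ : IsOpen Ω) (hφ : ContDiffOn ℝ 2 φ Ω) (k : Fin n) :
    ContinuousOn (wzR k φ) Ω := by
  have h : wzR k φ = fun w => (1/2 : ℂ) *
      (((pd (k,false) φ w : ℝ) : ℂ) - Complex.I * ((pd (k,true) φ w : ℝ) : ℂ)) := rfl
  rw [h]
  exact continuousOn_const.mul ((cont_pdφC hΩ hφ _).sub
    (continuousOn_const.mul (cont_pdφC hΩ hφ _)))

lemma cont_E (hΩ : IsOpen Ω) (hφ : ContDiffOn ℝ 2 φ Ω) :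
    ContinuousOn (fun w => ((Real.exp (-φ w) : ℝ) : ℂ)) Ω :=
  Complex.continuous_ofReal.comp_continuousOn
    (Real.continuous_exp.comp_continuousOn (hφ.continuousOn.neg))

lemma cont_fderiv2φ (hΩ : IsOpen Ω) (hφ : ContDiffOn ℝ 2 φ Ω) :
    ContinuousOn (fderiv ℝ (fderiv ℝ φ)) Ω :=
  (hφ.fderiv_of_isOpen (m := 1) hΩ (by norm_num)).continuousOn_fderiv_of_isOpen hΩ le_rfl

lemma cont_pd_pdφ (hΩ : IsOpen Ω) (hφ : ContDiffOn ℝ 2 φ Ω) (l m : Fin n × Bool) :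
    ContinuousOn (fun z => pd l (pd m φ) z) Ω := by
  apply ContinuousOn.congr
    (((cont_fderiv2φ hΩ hφ).clm_apply continuousOn_const).clm_apply continuousOn_const)
  exact fun z hz => pd_pd (diff_fderivφ hΩ hφ hz) l m

lemma pd_wzbarR_eq (hΩ : IsOpen Ω) (hφ : ContDiffOn ℝ 2 φ Ω) {z : Cn n} (hz : z ∈ Ω)
    (l : Fin n × Bool) (k : Fin n) :
    pd l (wzbarR k φ) z = (1/2 : ℂ) * (((pd l (pd (k,false) φ) z : ℝ) : ℂ)
      + Complex.I * ((pd l (pd (k,true) φ) z : ℝ) : ℂ)) := by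
  have h : wzbarR k φ = fun w => (1/2 : ℂ) *
      (((pd (k,false) φ w : ℝ) : ℂ) + Complex.I * ((pd (k,true) φ w : ℝ) : ℂ)) := rfl
  rw [h, pd_const_mul (g := fun w => ((pd (k,false) φ w : ℝ) : ℂ)
        + Complex.I * ((pd (k,true) φ w : ℝ) : ℂ)) ((diff_pdφC hΩ hφ hz _).add ((diff_pdφC hΩ hφ hz _).const_mul _)),
    pd_add (diff_pdφC hΩ hφ hz _) ((diff_pdφC hΩ hφ hz _).const_mul _),
    pd_const_mul (diff_pdφC hΩ hφ hz _), pd_ofReal (diff_pdφ hΩ hφ hz _),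
    pd_ofReal (diff_pdφ hΩ hφ hz _)]

lemma cont_pd_wzbarR (hΩ : IsOpen Ω) (hφ : ContDiffOn ℝ 2 φ Ω) (l : Fin n × Bool) (k : Fin n) :
    ContinuousOn (fun z => pd l (wzbarR k φ) z) Ω := by
  apply ContinuousOn.congr (f := fun z => (1/2 : ℂ) * (((pd l (pd (k,false) φ) z : ℝ) : ℂ)
      + Complex.I * ((pd l (pd (k,true) φ) z : ℝ) : ℂ)))
  · exact continuousOn_const.mul
      ((Complex.continuous_ofReal.comp_continuousOn (cont_pd_pdφ hΩ hφ l _)).add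
      (continuousOn_const.mul
        (Complex.continuous_ofReal.comp_continuousOn (cont_pd_pdφ hΩ hφ l _))))
  · exact fun z hz => pd_wzbarR_eq hΩ hφ hz l k
  
lemma cont_hess (hΩ : IsOpen Ω) (hφ : ContDiffOn ℝ 2 φ Ω) (j k : Fin n) :
    ContinuousOn (hess φ j k) Ω := by
  have h : hess φ j k = fun z => (1/2 : ℂ) * (pd (j,false) (wzbarR k φ) z
      - Complex.I * pd (j,true) (wzbarR k φ) z) := rfl
  rw [h]
  exact continuousOn_const.mul ((cont_pd_wzbarR hΩ hφ _ k).sub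
    (continuousOn_const.mul (cont_pd_wzbarR hΩ hφ _ k)))

lemma cdat_pdφ (hΩ : IsOpen Ω) (hφ : ContDiffOn ℝ 2 φ Ω) {z : Cn n} (hz : z ∈ Ω)
    (m : Fin n × Bool) : ContDiffAt ℝ 1 (pd m φ) z := by
  have h : pd m φ = fun w => (fderiv ℝ φ w) (dir m) := rfl
  rw [h]
  exact ((hφ.fderiv_of_isOpen (m := 1) hΩ (by norm_num)).contDiffAt
    (hΩ.mem_nhds hz)).clm_apply contDiffAt_const

lemma cdat_pdφC (hΩ : IsOpen Ω) (hφ : ContDiffOn ℝ 2 φ Ω) {z : Cn n} (hz : z ∈ Ω)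
    (m : Fin n × Bool) : ContDiffAt ℝ 1 (fun w => ((pd m φ w : ℝ) : ℂ)) z :=
  (Complex.ofRealCLM.contDiff.contDiffAt).comp z (cdat_pdφ hΩ hφ hz m)

lemma cdat_wzR (hΩ : IsOpen Ω) (hφ : ContDiffOn ℝ 2 φ Ω) {z : Cn n} (hz : z ∈ Ω)
    (k : Fin n) : ContDiffAt ℝ 1 (wzR k φ) z := by
  have h : wzR k φ = fun w => (1/2 : ℂ) *
      (((pd (k,false) φ w : ℝ) : ℂ) - Complex.I * ((pd (k,true) φ w : ℝ) : ℂ)) := rfl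
  rw [h]
  exact contDiffAt_const.mul ((cdat_pdφC hΩ hφ hz _).sub
    (contDiffAt_const.mul (cdat_pdφC hΩ hφ hz _)))

lemma cdat_E (hΩ : IsOpen Ω) (hφ : ContDiffOn ℝ 2 φ Ω) {z : Cn n} (hz : z ∈ Ω) :
    ContDiffAt ℝ 1 (fun w => ((Real.exp (-φ w) : ℝ) : ℂ)) z :=
  (Complex.ofRealCLM.contDiff.contDiffAt).comp z
    ((Real.contDiff_exp.contDiffAt).comp z
      (((hφ.contDiffAt (hΩ.mem_nhds hz)).of_le (by norm_num)).neg))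

end KMaux7
section KMaux8
open ComplexConjugate Function MeasureTheory
variable {n : ℕ} {Ω : Set (Cn n)}

lemma integrable_wz {G : Cn n → ℂ} (hG : ContDiff ℝ 1 G) (hGsupp : HasCompactSupport G)
    (j : Fin n) : Integrable (fun z => wz j G z) := by
  have h : (fun z => wz j G z)
      = fun z => (1/2:ℂ) * (pd (j,false) G z - Complex.I * pd (j,true) G z) := rfl
  rw [h]
  exact ((integrable_pd hG hGsupp _).sub ((integrable_pd hG hGsupp _).const_mul _)).const_mul _

lemma integrable_wzbar {G : Cn n → ℂ} (hG : ContDiff ℝ 1 G) (hGsupp : HasCompactSupport G)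
    (j : Fin n) : Integrable (fun z => wzbar j G z) := by
  have h : (fun z => wzbar j G z)
      = fun z => (1/2:ℂ) * (pd (j,false) G z + Complex.I * pd (j,true) G z) := rfl
  rw [h]
  exact ((integrable_pd hG hGsupp _).add ((integrable_pd hG hGsupp _).const_mul _)).const_mul _

lemma ofReal_integral_normsq (φ : Cn n → ℝ) (g : Cn n → ℂ) :
    (Complex.ofReal (∫ z in Ω, ‖g z‖^2 * Real.exp (-φ z))
      = ∫ z in Ω, g z * conj (g z) * (Real.exp (-φ z) : ℂ)) := by
  have h1 : (∫ z in Ω, g z * conj (g z) * (Real.exp (-φ z) : ℂ))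
      = ∫ z in Ω, ((‖g z‖^2 * Real.exp (-φ z) : ℝ) : ℂ) := by
    apply integral_congr_ae (Filter.Eventually.of_forall fun z => ?_)
    rw [Complex.mul_conj, Complex.normSq_eq_norm_sq]
    push_cast
    ring
  rw [h1]
  exact (integral_ofReal (𝕜 := ℂ)).symm

end KMaux8

open ComplexConjugate

/-- Kohn–Morrey formula for compactly supported `(0,1)`-forms:
`Σ_{j,k} ∫ φ_{jk̄} f_j f̄_k e^{−φ} + Σ_{j,k} ∫ |∂f_j/∂z̄_k|² e^{−φ} = ‖∂̄f‖²_φ + ‖∂̄*_φ f‖²_φ`. -/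
theorem stmt7 {n : ℕ} (Ω : Set (Cn n)) (hΩ : IsOpen Ω)
    (φ : Cn n → ℝ) (hφ : ContDiffOn ℝ 2 φ Ω)
    (f : Fin n → Cn n → ℂ) (hf : ∀ j, SmoothCompSupp Ω (f j)) :
    (∑ j : Fin n, ∑ k : Fin n,
        ∫ z in Ω, hess φ j k z * f j z * (starRingEnd ℂ) (f k z) * (Real.exp (-φ z) : ℂ))
      + Complex.ofReal (∑ j : Fin n, ∑ k : Fin n,
          ∫ z in Ω, ‖wzbar k (f j) z‖^2 * Real.exp (-φ z))
    = Complex.ofReal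
        ((∑ p ∈ Finset.univ.filter (fun p : Fin n × Fin n => p.1 < p.2),
            ∫ z in Ω, ‖wzbar p.1 (f p.2) z - wzbar p.2 (f p.1) z‖^2 * Real.exp (-φ z))
          + ∫ z in Ω, ‖dbarStar φ f z‖^2 * Real.exp (-φ z)) := by
  classical
  have hfs : ∀ j, ContDiff ℝ (⊤ : ℕ∞) (f j) := fun j => (hf j).1
  set K : Set (Cn n) := ⋃ j, tsupport (f j) with hKdef
  have hKcl : IsClosed K := isClosed_iUnion_of_finite fun j => isClosed_tsupport _
  have hKc : IsCompact K := isCompact_iUnion fun j => (hf j).2.1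
  have hKΩ : K ⊆ Ω := Set.iUnion_subset fun j => (hf j).2.2
  have hsub : ∀ j, tsupport (f j) ⊆ K := fun j => Set.subset_iUnion (fun i => tsupport (f i)) j
  have hfz : ∀ j x, x ∉ K → f j x = 0 := fun j x hx =>
    image_eq_zero_of_notMem_tsupport fun h => hx (hsub j h)
  have hpdz : ∀ j m x, x ∉ K → pd m (f j) x = 0 := by
    intro j m x hx
    have h0 : fderiv ℝ (f j) x = 0 := by
      by_contra h
      exact hx (hsub j (support_fderiv_subset ℝ (Function.mem_support.mpr h)))
    simp [pd, h0]
  have hwzbarz : ∀ j k x, x ∉ K → wzbar k (f j) x = 0 := by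
    intro j k x hx
    have h1 := hpdz j (k, false) x hx
    have h2 := hpdz j (k, true) x hx
    simp [wzbar, h1, h2]
  have hwzz : ∀ j x, x ∉ K → wz j (f j) x = 0 := by
    intro j x hx
    have h1 := hpdz j (j, false) x hx
    have h2 := hpdz j (j, true) x hx
    simp [wz, h1, h2]
  -- continuity on Ω
  have hcf : ∀ j, ContinuousOn (f j) Ω := fun j => (hfs j).continuous.continuousOn
  have hcwzbar : ∀ j k, ContinuousOn (wzbar k (f j)) Ω := fun j k =>
    ((hfs j).wzbar' k).continuous.continuousOn
  have hcwz : ∀ j, ContinuousOn (wz j (f j)) Ω := fun j =>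
    ((hfs j).wz' j).continuous.continuousOn
  have hcE := cont_E (n := n) hΩ hφ
  have hcd : ∀ j, ContinuousOn (fun z => wz j (f j) z - wzR j φ z * f j z) Ω := fun j =>
    ((hcwz j).sub ((cont_wzR hΩ hφ j).mul (hcf j)))
  -- integrability of the basic integrands
  have hint1 : ∀ j k, MeasureTheory.IntegrableOn
      (fun z => hess φ j k z * f j z * conj (f k z) * (Real.exp (-φ z) : ℂ)) Ω := by
    intro j k
    apply integrable_glue hΩ hKcl hKc hKΩ
      ((((cont_hess hΩ hφ j k).mul (hcf j)).mul (cont_conj (hcf k))).mul hcE)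
    apply Function.support_subset_iff'.mpr
    intro x hx; simp [hfz j x hx]
  have hint2 : ∀ j k j' k', MeasureTheory.IntegrableOn
      (fun z => wzbar k (f j) z * conj (wzbar k' (f j') z) * (Real.exp (-φ z) : ℂ)) Ω := by
    intro j k j' k'
    apply integrable_glue hΩ hKcl hKc hKΩ
      (((hcwzbar j k).mul (cont_conj (hcwzbar j' k'))).mul hcE)
    apply Function.support_subset_iff'.mpr
    intro x hx; simp [hwzbarz j k x hx]
  have hint4 : ∀ j k, MeasureTheory.IntegrableOn
      (fun z => (wz j (f j) z - wzR j φ z * f j z)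
        * conj (wz k (f k) z - wzR k φ z * f k z) * (Real.exp (-φ z) : ℂ)) Ω := by
    intro j k
    apply integrable_glue hΩ hKcl hKc hKΩ (((hcd j).mul (cont_conj (hcd k))).mul hcE)
    apply Function.support_subset_iff'.mpr
    intro x hx; simp [hwzz j x hx, hfz j x hx]
  -- integration by parts identity
  have hIBP : ∀ j k : Fin n,
      (∫ z in Ω, (wz j (f j) z - wzR j φ z * f j z)
          * conj (wz k (f k) z - wzR k φ z * f k z) * (Real.exp (-φ z) : ℂ))
      = (∫ z in Ω, wzbar k (f j) z * conj (wzbar j (f k) z) * (Real.exp (-φ z) : ℂ))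
        + ∫ z in Ω, hess φ j k z * f j z * conj (f k z) * (Real.exp (-φ z) : ℂ) := by
    intro j k
    set G : Cn n → ℂ := fun w => f j w * (Real.exp (-φ w) : ℂ)
      * conj (wz k (f k) w - wzR k φ w * f k w) with hGdef
    set H : Cn n → ℂ := fun w => f j w * conj (wzbar j (f k) w) * (Real.exp (-φ w) : ℂ)
      with hHdef
    have hGsupp : Function.support G ⊆ K := Function.support_subset_iff'.mpr fun x hx => by
      simp [hGdef, hfz j x hx]
    have hHsupp : Function.support H ⊆ K := Function.support_subset_iff'.mpr fun x hx => by
      simp [hHdef, hfz j x hx]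
    have hGC1 : ContDiff ℝ 1 G := by
      apply glue_C1 hΩ hKcl hKΩ (fun z hz => ?_) hGsupp
      exact (((hfs j).one.contDiffAt).mul (cdat_E hΩ hφ hz)).mul
        (cdat_conj ((((hfs k).wz' k).one.contDiffAt).sub
          ((cdat_wzR hΩ hφ hz k).mul ((hfs k).one.contDiffAt))))
    have hHC1 : ContDiff ℝ 1 H := by
      apply glue_C1 hΩ hKcl hKΩ (fun z hz => ?_) hHsupp
      exact ((((hfs j).one.contDiffAt).mul
        (cdat_conj (((hfs k).wzbar' j).one.contDiffAt))).mul (cdat_E hΩ hφ hz))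
    have hGcs : HasCompactSupport G := hasCompactSupport_of hKc hKcl hGsupp
    have hHcs : HasCompactSupport H := hasCompactSupport_of hKc hKcl hHsupp
    have hGts : tsupport G ⊆ Ω := (closure_minimal hGsupp hKcl).trans hKΩ
    have hHts : tsupport H ⊆ Ω := (closure_minimal hHsupp hKcl).trans hKΩ
    have hptw : Set.EqOn
        (fun z => (wz j (f j) z - wzR j φ z * f j z)
          * conj (wz k (f k) z - wzR k φ z * f k z) * (Real.exp (-φ z) : ℂ))
        (fun z => wzbar k (f j) z * conj (wzbar j (f k) z) * (Real.exp (-φ z) : ℂ)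
          + hess φ j k z * f j z * conj (f k z) * (Real.exp (-φ z) : ℂ)
          + wz j G z - wzbar k H z) Ω := by
      intro z hz
      rw [hGdef, hHdef]
      exact pointwise_ibp hΩ hφ (hfs j) (hfs k) j k hz
    rw [MeasureTheory.setIntegral_congr_fun hΩ.measurableSet hptw]
    have e1 : (∫ z in Ω, (wzbar k (f j) z * conj (wzbar j (f k) z) * (Real.exp (-φ z) : ℂ)
          + hess φ j k z * f j z * conj (f k z) * (Real.exp (-φ z) : ℂ)
          + wz j G z - wzbar k H z))
        = (∫ z in Ω, (wzbar k (f j) z * conj (wzbar j (f k) z) * (Real.exp (-φ z) : ℂ)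
          + hess φ j k z * f j z * conj (f k z) * (Real.exp (-φ z) : ℂ)
          + wz j G z)) - ∫ z in Ω, wzbar k H z :=
      MeasureTheory.integral_sub
        (((hint2 j k k j).add (hint1 j k)).add (integrable_wz hGC1 hGcs j).integrableOn)
        ((integrable_wzbar hHC1 hHcs k).integrableOn)
    have e2 : (∫ z in Ω, (wzbar k (f j) z * conj (wzbar j (f k) z) * (Real.exp (-φ z) : ℂ)
          + hess φ j k z * f j z * conj (f k z) * (Real.exp (-φ z) : ℂ)
          + wz j G z))
        = (∫ z in Ω, (wzbar k (f j) z * conj (wzbar j (f k) z) * (Real.exp (-φ z) : ℂ)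
          + hess φ j k z * f j z * conj (f k z) * (Real.exp (-φ z) : ℂ)))
          + ∫ z in Ω, wz j G z :=
      MeasureTheory.integral_add ((hint2 j k k j).add (hint1 j k))
        ((integrable_wz hGC1 hGcs j).integrableOn)
    have e3 : (∫ z in Ω, (wzbar k (f j) z * conj (wzbar j (f k) z) * (Real.exp (-φ z) : ℂ)
          + hess φ j k z * f j z * conj (f k z) * (Real.exp (-φ z) : ℂ)))
        = (∫ z in Ω, wzbar k (f j) z * conj (wzbar j (f k) z) * (Real.exp (-φ z) : ℂ))
          + ∫ z in Ω, hess φ j k z * f j z * conj (f k z) * (Real.exp (-φ z) : ℂ) :=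
      MeasureTheory.integral_add (hint2 j k k j) (hint1 j k)
    rw [e1, e2, e3, integral_wz_zero hΩ hGC1 hGcs hGts j,
      integral_wzbar_zero hΩ hHC1 hHcs hHts k]
    ring
  -- step: dbar-star integral equals double sum
  have hq6 : ∀ z, dbarStar φ f z * conj (dbarStar φ f z) * (Real.exp (-φ z) : ℂ)
      = ∑ j, ∑ k, (wz j (f j) z - wzR j φ z * f j z)
          * conj (wz k (f k) z - wzR k φ z * f k z) * (Real.exp (-φ z) : ℂ) := by
    intro z
    have hd : dbarStar φ f z = -∑ j, (wz j (f j) z - wzR j φ z * f j z) := rfl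
    rw [hd, map_neg, map_sum, neg_mul_neg, Finset.sum_mul_sum, Finset.sum_mul]
    apply Finset.sum_congr rfl
    intro j _
    rw [Finset.sum_mul]
  have h6 : (∫ z in Ω, dbarStar φ f z * conj (dbarStar φ f z) * (Real.exp (-φ z) : ℂ))
      = ∑ j, ∑ k, ∫ z in Ω, (wz j (f j) z - wzR j φ z * f j z)
          * conj (wz k (f k) z - wzR k φ z * f k z) * (Real.exp (-φ z) : ℂ) := by
    rw [MeasureTheory.integral_congr_ae (Filter.Eventually.of_forall hq6),
      MeasureTheory.integral_finset_sum _
        (fun j _ => MeasureTheory.integrable_finset_sum _ (fun k _ => hint4 j k))]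
    exact Finset.sum_congr rfl fun j _ =>
      MeasureTheory.integral_finset_sum _ (fun k _ => hint4 j k)
  -- conversions of the real integrals to complex ones
  have hL2 : Complex.ofReal (∑ j : Fin n, ∑ k : Fin n,
        ∫ z in Ω, ‖wzbar k (f j) z‖^2 * Real.exp (-φ z))
      = ∑ j : Fin n, ∑ k : Fin n,
          ∫ z in Ω, wzbar k (f j) z * conj (wzbar k (f j) z) * (Real.exp (-φ z) : ℂ) := by
    rw [Complex.ofReal_sum]
    apply Finset.sum_congr rfl
    intro j _
    rw [Complex.ofReal_sum]
    exact Finset.sum_congr rfl fun k _ => ofReal_integral_normsq φ _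
  have hR5 : Complex.ofReal (∑ p ∈ Finset.univ.filter (fun p : Fin n × Fin n => p.1 < p.2),
        ∫ z in Ω, ‖wzbar p.1 (f p.2) z - wzbar p.2 (f p.1) z‖^2 * Real.exp (-φ z))
      = ∑ p ∈ Finset.univ.filter (fun p : Fin n × Fin n => p.1 < p.2),
          ∫ z in Ω, (wzbar p.1 (f p.2) z - wzbar p.2 (f p.1) z)
            * conj (wzbar p.1 (f p.2) z - wzbar p.2 (f p.1) z) * (Real.exp (-φ z) : ℂ) := by
    rw [Complex.ofReal_sum]
    exact Finset.sum_congr rfl fun p _ => ofReal_integral_normsq φ _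
  have hR6 : Complex.ofReal (∫ z in Ω, ‖dbarStar φ f z‖^2 * Real.exp (-φ z))
      = ∫ z in Ω, dbarStar φ f z * conj (dbarStar φ f z) * (Real.exp (-φ z) : ℂ) :=
    ofReal_integral_normsq φ _
  -- expansion of the pair terms
  have h5 : ∀ p : Fin n × Fin n,
      (∫ z in Ω, (wzbar p.1 (f p.2) z - wzbar p.2 (f p.1) z)
          * conj (wzbar p.1 (f p.2) z - wzbar p.2 (f p.1) z) * (Real.exp (-φ z) : ℂ))
      = ((∫ z in Ω, wzbar p.1 (f p.2) z * conj (wzbar p.1 (f p.2) z) * (Real.exp (-φ z) : ℂ))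
          + ∫ z in Ω, wzbar p.2 (f p.1) z * conj (wzbar p.2 (f p.1) z) * (Real.exp (-φ z) : ℂ))
        - ((∫ z in Ω, wzbar p.1 (f p.2) z * conj (wzbar p.2 (f p.1) z) * (Real.exp (-φ z) : ℂ))
          + ∫ z in Ω, wzbar p.2 (f p.1) z * conj (wzbar p.1 (f p.2) z) * (Real.exp (-φ z) : ℂ)) := by
    intro p
    have hpt : ∀ z, (wzbar p.1 (f p.2) z - wzbar p.2 (f p.1) z)
          * conj (wzbar p.1 (f p.2) z - wzbar p.2 (f p.1) z) * (Real.exp (-φ z) : ℂ)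
        = (wzbar p.1 (f p.2) z * conj (wzbar p.1 (f p.2) z) * (Real.exp (-φ z) : ℂ)
            + wzbar p.2 (f p.1) z * conj (wzbar p.2 (f p.1) z) * (Real.exp (-φ z) : ℂ))
          - (wzbar p.1 (f p.2) z * conj (wzbar p.2 (f p.1) z) * (Real.exp (-φ z) : ℂ)
            + wzbar p.2 (f p.1) z * conj (wzbar p.1 (f p.2) z) * (Real.exp (-φ z) : ℂ)) := by
      intro z; rw [map_sub]; ring
    rw [MeasureTheory.integral_congr_ae (Filter.Eventually.of_forall hpt)]
    have e1 : (∫ z in Ω, ((wzbar p.1 (f p.2) z * conj (wzbar p.1 (f p.2) z) * (Real.exp (-φ z) : ℂ)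
            + wzbar p.2 (f p.1) z * conj (wzbar p.2 (f p.1) z) * (Real.exp (-φ z) : ℂ))
          - (wzbar p.1 (f p.2) z * conj (wzbar p.2 (f p.1) z) * (Real.exp (-φ z) : ℂ)
            + wzbar p.2 (f p.1) z * conj (wzbar p.1 (f p.2) z) * (Real.exp (-φ z) : ℂ))))
        = (∫ z in Ω, (wzbar p.1 (f p.2) z * conj (wzbar p.1 (f p.2) z) * (Real.exp (-φ z) : ℂ)
            + wzbar p.2 (f p.1) z * conj (wzbar p.2 (f p.1) z) * (Real.exp (-φ z) : ℂ)))
          - ∫ z in Ω, (wzbar p.1 (f p.2) z * conj (wzbar p.2 (f p.1) z) * (Real.exp (-φ z) : ℂ)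
            + wzbar p.2 (f p.1) z * conj (wzbar p.1 (f p.2) z) * (Real.exp (-φ z) : ℂ)) :=
      MeasureTheory.integral_sub
        ((hint2 p.2 p.1 p.2 p.1).add (hint2 p.1 p.2 p.1 p.2))
        ((hint2 p.2 p.1 p.1 p.2).add (hint2 p.1 p.2 p.2 p.1))
    have e2 : (∫ z in Ω, (wzbar p.1 (f p.2) z * conj (wzbar p.1 (f p.2) z) * (Real.exp (-φ z) : ℂ)
            + wzbar p.2 (f p.1) z * conj (wzbar p.2 (f p.1) z) * (Real.exp (-φ z) : ℂ)))
        = (∫ z in Ω, wzbar p.1 (f p.2) z * conj (wzbar p.1 (f p.2) z) * (Real.exp (-φ z) : ℂ))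
          + ∫ z in Ω, wzbar p.2 (f p.1) z * conj (wzbar p.2 (f p.1) z) * (Real.exp (-φ z) : ℂ) :=
      MeasureTheory.integral_add (hint2 p.2 p.1 p.2 p.1) (hint2 p.1 p.2 p.1 p.2)
    have e3 : (∫ z in Ω, (wzbar p.1 (f p.2) z * conj (wzbar p.2 (f p.1) z) * (Real.exp (-φ z) : ℂ)
            + wzbar p.2 (f p.1) z * conj (wzbar p.1 (f p.2) z) * (Real.exp (-φ z) : ℂ)))
        = (∫ z in Ω, wzbar p.1 (f p.2) z * conj (wzbar p.2 (f p.1) z) * (Real.exp (-φ z) : ℂ))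
          + ∫ z in Ω, wzbar p.2 (f p.1) z * conj (wzbar p.1 (f p.2) z) * (Real.exp (-φ z) : ℂ) :=
      MeasureTheory.integral_add (hint2 p.2 p.1 p.1 p.2) (hint2 p.1 p.2 p.2 p.1)
    rw [e1, e2, e3]
  -- the finitary rearrangement
  have hsplit : (∑ j : Fin n, ∑ k : Fin n,
        ∫ z in Ω, wzbar k (f j) z * conj (wzbar k (f j) z) * (Real.exp (-φ z) : ℂ))
      - (∑ j : Fin n, ∑ k : Fin n,
        ∫ z in Ω, wzbar k (f j) z * conj (wzbar j (f k) z) * (Real.exp (-φ z) : ℂ))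
      = ∑ p ∈ Finset.univ.filter (fun p : Fin n × Fin n => p.1 < p.2),
          (((∫ z in Ω, wzbar p.1 (f p.2) z * conj (wzbar p.1 (f p.2) z) * (Real.exp (-φ z) : ℂ))
            + ∫ z in Ω, wzbar p.2 (f p.1) z * conj (wzbar p.2 (f p.1) z) * (Real.exp (-φ z) : ℂ))
          - ((∫ z in Ω, wzbar p.1 (f p.2) z * conj (wzbar p.2 (f p.1) z) * (Real.exp (-φ z) : ℂ))
            + ∫ z in Ω, wzbar p.2 (f p.1) z * conj (wzbar p.1 (f p.2) z) * (Real.exp (-φ z) : ℂ))) := by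
    have hF := offdiag_split (fun j k =>
      (∫ z in Ω, wzbar k (f j) z * conj (wzbar k (f j) z) * (Real.exp (-φ z) : ℂ))
      - ∫ z in Ω, wzbar k (f j) z * conj (wzbar j (f k) z) * (Real.exp (-φ z) : ℂ))
    have hdiag : ∑ j : Fin n,
        ((∫ z in Ω, wzbar j (f j) z * conj (wzbar j (f j) z) * (Real.exp (-φ z) : ℂ))
          - ∫ z in Ω, wzbar j (f j) z * conj (wzbar j (f j) z) * (Real.exp (-φ z) : ℂ))
        = 0 := Finset.sum_eq_zero fun j _ => sub_self _
    rw [hdiag, add_zero] at hF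
    calc (∑ j : Fin n, ∑ k : Fin n,
        ∫ z in Ω, wzbar k (f j) z * conj (wzbar k (f j) z) * (Real.exp (-φ z) : ℂ))
      - (∑ j : Fin n, ∑ k : Fin n,
        ∫ z in Ω, wzbar k (f j) z * conj (wzbar j (f k) z) * (Real.exp (-φ z) : ℂ))
        = ∑ j : Fin n, ∑ k : Fin n,
          ((∫ z in Ω, wzbar k (f j) z * conj (wzbar k (f j) z) * (Real.exp (-φ z) : ℂ))
            - ∫ z in Ω, wzbar k (f j) z * conj (wzbar j (f k) z) * (Real.exp (-φ z) : ℂ)) := by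
          rw [← Finset.sum_sub_distrib]
          exact Finset.sum_congr rfl fun j _ => (Finset.sum_sub_distrib _ _).symm
      _ = _ := by
          rw [hF]
          apply Finset.sum_congr rfl
          intro p _
          ring
  -- final assembly
  rw [hL2, Complex.ofReal_add, hR5, hR6, h6]
  have h4 : (∑ j : Fin n, ∑ k : Fin n, ∫ z in Ω, (wz j (f j) z - wzR j φ z * f j z)
        * conj (wz k (f k) z - wzR k φ z * f k z) * (Real.exp (-φ z) : ℂ))
      = (∑ j : Fin n, ∑ k : Fin n,
          ∫ z in Ω, wzbar k (f j) z * conj (wzbar j (f k) z) * (Real.exp (-φ z) : ℂ))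
        + ∑ j : Fin n, ∑ k : Fin n,
          ∫ z in Ω, hess φ j k z * f j z * conj (f k z) * (Real.exp (-φ z) : ℂ) := by
    rw [← Finset.sum_add_distrib]
    apply Finset.sum_congr rfl
    intro j _
    rw [← Finset.sum_add_distrib]
    exact Finset.sum_congr rfl fun k _ => hIBP j k
  rw [h4]
  have h5sum : (∑ p ∈ Finset.univ.filter (fun p : Fin n × Fin n => p.1 < p.2),
        ∫ z in Ω, (wzbar p.1 (f p.2) z - wzbar p.2 (f p.1) z)
          * conj (wzbar p.1 (f p.2) z - wzbar p.2 (f p.1) z) * (Real.exp (-φ z) : ℂ))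
      = ∑ p ∈ Finset.univ.filter (fun p : Fin n × Fin n => p.1 < p.2),
          (((∫ z in Ω, wzbar p.1 (f p.2) z * conj (wzbar p.1 (f p.2) z) * (Real.exp (-φ z) : ℂ))
            + ∫ z in Ω, wzbar p.2 (f p.1) z * conj (wzbar p.2 (f p.1) z) * (Real.exp (-φ z) : ℂ))
          - ((∫ z in Ω, wzbar p.1 (f p.2) z * conj (wzbar p.2 (f p.1) z) * (Real.exp (-φ z) : ℂ))
            + ∫ z in Ω, wzbar p.2 (f p.1) z * conj (wzbar p.1 (f p.2) z) * (Real.exp (-φ z) : ℂ))) :=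
    Finset.sum_congr rfl fun p _ => h5 p
  rw [h5sum]
  linear_combination hsplit
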